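/- Regard A as an (A⋈^f J)-module via the surjective projection p_A : A⋈^f J → A, (a, f(a)+j) ↦ a. The map Λ : f^{-1}(J) → Hom_{A⋈^f J}(A, A⋈^f J), sending x ∈ f^{-1}(J) to the (A⋈^f J)-linear map λ_x : A → A⋈^f J defined by λ_x(a) := (a·x, 0), is a well-defined injective A-linear map; and Λ is surjective if and only if the annihilator of J in the subring f(A)+J of B is zero, i.e., the only element b ∈ f(A)+J with bJ = 0 is b = 0. -/

import Mathlib

section Amalgamation

variable {A B : Type*} [CommRing A] [CommRing B]

/-- The amalgamation `A ⋈^f J` of `A` with `B` along the ideal `J` of `B` with respect to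
the ring homomorphism `f : A → B`, realized as the subring
`{(a, f a + j) | a ∈ A, j ∈ J}` of `A × B`. -/
def amalg (f : A →+* B) (J : Ideal B) : Subring (A × B) where
  carrier := {x : A × B | x.2 - f x.1 ∈ J}
  zero_mem' := by simp
  one_mem' := by simp
  add_mem' := by
    intro x y hx hy
    simp only [Set.mem_setOf_eq, Prod.fst_add, Prod.snd_add, map_add] at *
    have h : x.2 + y.2 - (f x.1 + f y.1) = x.2 - f x.1 + (y.2 - f y.1) := by ring
    rw [h]; exact J.add_mem hx hy
  neg_mem' := by
    intro x hx
    simp only [Set.mem_setOf_eq, Prod.fst_neg, Prod.snd_neg, map_neg] at *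
    have h : -x.2 - -f x.1 = -(x.2 - f x.1) := by ring
    rw [h]; exact J.neg_mem hx
  mul_mem' := by
    intro x y hx hy
    simp only [Set.mem_setOf_eq, Prod.fst_mul, Prod.snd_mul, map_mul] at *
    have h : x.2 * y.2 - f x.1 * f y.1 = x.2 * (y.2 - f y.1) + (x.2 - f x.1) * f y.1 := by ring
    rw [h]
    exact J.add_mem (J.mul_mem_left _ hy) (J.mul_mem_right _ hx)

lemma mem_amalg_iff (f : A →+* B) (J : Ideal B) (x : A × B) :
    x ∈ amalg f J ↔ x.2 - f x.1 ∈ J := Iff.rfl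

/-- The canonical embedding `ι : A → A ⋈^f J`, `a ↦ (a, f a)`. -/
def iota (f : A →+* B) (J : Ideal B) : A →+* amalg f J :=
  ((RingHom.id A).prod f).codRestrict (amalg f J) (fun a => by
    simp [mem_amalg_iff])

/-- The natural projection `p_A : A ⋈^f J → A`. -/
def pA (f : A →+* B) (J : Ideal B) : amalg f J →+* A :=
  (RingHom.fst A B).comp (amalg f J).subtype

/-- The natural projection `p_B : A ⋈^f J → B`. -/
def pB (f : A →+* B) (J : Ideal B) : amalg f J →+* B :=
  (RingHom.snd A B).comp (amalg f J).subtype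

/-- The subring `f(A) + J` of `B`. -/
def fAJ (f : A →+* B) (J : Ideal B) : Subring B where
  carrier := {b : B | ∃ a : A, ∃ j ∈ J, b = f a + j}
  zero_mem' := ⟨0, 0, J.zero_mem, by simp⟩
  one_mem' := ⟨1, 0, J.zero_mem, by simp⟩
  add_mem' := by
    rintro x y ⟨a, j, hj, rfl⟩ ⟨a', j', hj', rfl⟩
    exact ⟨a + a', j + j', J.add_mem hj hj', by rw [map_add]; ring⟩
  neg_mem' := by
    rintro x ⟨a, j, hj, rfl⟩
    exact ⟨-a, -j, J.neg_mem hj, by rw [map_neg]; ring⟩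
  mul_mem' := by
    rintro x y ⟨a, j, hj, rfl⟩ ⟨a', j', hj', rfl⟩
    refine ⟨a * a', f a * j' + j * (f a' + j'), ?_, by rw [map_mul]; ring⟩
    exact J.add_mem (J.mul_mem_left _ hj') (J.mul_mem_right _ hj)

lemma f_mem_fAJ (f : A →+* B) (J : Ideal B) (a : A) : f a ∈ fAJ f J :=
  ⟨a, 0, J.zero_mem, by ring⟩

end Amalgamation

set_option synthInstance.maxHeartbeats 1000000 in
set_option maxHeartbeats 4000000 in
/-- Regarding `A` as an `(A ⋈^f J)`-module via `p_A`, the map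
`Λ : f⁻¹(J) → Hom_{A ⋈^f J}(A, A ⋈^f J)`, `Λ(x)(a) = (a x, 0)`, is a well-defined
injective `A`-linear map, and `Λ` is surjective iff the annihilator of `J` in
`f(A) + J` is zero. -/
theorem stmt19 {A B : Type*} [CommRing A] [CommRing B] (f : A →+* B) (J : Ideal B) :
    letI : Module (amalg f J) A := Module.compHom A (pA f J)
    letI : Module A (A →ₗ[amalg f J] amalg f J) :=
      Module.compHom (A →ₗ[amalg f J] amalg f J) (iota f J)
    ∃ Λ : (Ideal.comap f J : Ideal A) →ₗ[A] (A →ₗ[amalg f J] amalg f J),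
      (∀ (x : Ideal.comap f J) (a : A),
        ((Λ x a : A × B)) = ((a * (x : A), (0 : B)) : A × B)) ∧
      Function.Injective Λ ∧
      (Function.Surjective Λ ↔
        ∀ b ∈ fAJ f J, (∀ j ∈ J, b * j = 0) → b = 0) := by
  letI : Module (amalg f J) A := Module.compHom A (pA f J)
  letI : Module A (A →ₗ[amalg f J] amalg f J) :=
    Module.compHom (A →ₗ[amalg f J] amalg f J) (iota f J)
  have mem0 : ∀ (x : A), f x ∈ J → ∀ a : A, ((a * x, (0 : B)) : A × B) ∈ amalg f J := by
    intro x hx a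
    show (0 : B) - f (a * x) ∈ J
    rw [zero_sub, map_mul]
    exact J.neg_mem (J.mul_mem_left _ hx)
  have hsmulA : ∀ (r : amalg f J) (a : A), r • a = (r : A × B).1 * a := fun _ _ => rfl
  have hsmulH : ∀ (c : A) (φ : A →ₗ[amalg f J] amalg f J) (a : A),
      (c • φ) a = iota f J c * φ a := fun _ _ _ => rfl
  let lam : ↥(Ideal.comap f J) → (A →ₗ[amalg f J] amalg f J) := fun x =>
    { toFun := fun a => ⟨(a * (x : A), 0), mem0 x x.2 a⟩
      map_add' := fun a b => by
        apply Subtype.ext; apply Prod.ext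
        · show (a + b) * (x : A) = a * x + b * x; ring
        · show (0 : B) = 0 + 0; ring
      map_smul' := fun r a => by
        apply Subtype.ext; apply Prod.ext
        · show ((r : A × B).1 * a) * (x : A) = (r : A × B).1 * (a * x); ring
        · show (0 : B) = (r : A × B).2 * 0; ring }
  have lam_apply : ∀ (x : Ideal.comap f J) (a : A),
      ((lam x a : A × B)) = ((a * (x : A), (0 : B)) : A × B) := fun _ _ => rfl
  refine ⟨{ toFun := lam
            map_add' := fun x y => by
              apply LinearMap.ext; intro a
              apply Subtype.ext; apply Prod.ext
              · show a * ((x : A) + y) = a * x + a * y; ring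
              · show (0 : B) = 0 + 0; ring
            map_smul' := fun c x => by
              apply LinearMap.ext; intro a
              rw [RingHom.id_apply, hsmulH]
              apply Subtype.ext; apply Prod.ext
              · show a * (c * (x : A)) = c * (a * x); ring
              · show (0 : B) = f c * 0; ring }, lam_apply, ?_, ?_⟩
  · -- injectivity
    intro x y hxy
    have h1 : (1 : A) * (x : A) = 1 * (y : A) :=
      congrArg (fun ψ : A →ₗ[amalg f J] amalg f J => ((ψ 1 : A × B)).1) hxy
    rw [one_mul, one_mul] at h1
    exact Subtype.ext h1
  · constructor
    · -- surjective → annihilator zero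
      intro hsurj b hb hbJ
      obtain ⟨a, j, hj, rfl⟩ := hb
      set b := f a + j with hbdef
      have memφ : ∀ c : A, ((c * a, f c * b) : A × B) ∈ amalg f J := by
        intro c
        show f c * b - f (c * a) ∈ J
        rw [map_mul]
        have : f c * b - f c * f a = f c * j := by rw [hbdef]; ring
        rw [this]
        exact J.mul_mem_left _ hj
      let φ : A →ₗ[amalg f J] amalg f J :=
        { toFun := fun c => ⟨(c * a, f c * b), memφ c⟩
          map_add' := fun c d => by
            apply Subtype.ext; apply Prod.ext
            · show (c + d) * a = c * a + d * a; ring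
            · show f (c + d) * b = f c * b + f d * b; rw [map_add]; ring
          map_smul' := fun r c => by
            apply Subtype.ext; apply Prod.ext
            · show ((r : A × B).1 * c) * a = (r : A × B).1 * (c * a); ring
            · show f ((r : A × B).1 * c) * b = (r : A × B).2 * (f c * b)
              rw [map_mul]
              have hr : (r : A × B).2 - f (r : A × B).1 ∈ J := r.2
              have := hbJ _ hr
              have h2 : (r : A × B).2 * (f c * b) - f (r : A × B).1 * f c * b
                  = f c * (b * ((r : A × B).2 - f (r : A × B).1)) := by ring
              have h3 : (r : A × B).2 * (f c * b) - f (r : A × B).1 * f c * b = 0 := by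
                rw [h2, this, mul_zero]
              exact (sub_eq_zero.mp h3).symm }
      obtain ⟨x, hx⟩ := hsurj φ
      have h1 : (0 : B) = f 1 * b :=
        congrArg (fun ψ : A →ₗ[amalg f J] amalg f J => ((ψ 1 : A × B)).2) hx
      rw [map_one, one_mul] at h1
      exact h1.symm
    · -- annihilator zero → surjective
      intro hann φ
      set u := φ 1 with hu
      have hub : ∀ j ∈ J, j * (u : A × B).2 = 0 := by
        intro j hj
        have hmem : ((0 : A), j) ∈ amalg f J := by
          show j - f 0 ∈ J; rw [map_zero, sub_zero]; exact hj
        have h0 : (⟨((0 : A), j), hmem⟩ : amalg f J) • (1 : A) = 0 := by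
          rw [hsmulA]; simp
        have := φ.map_smul (⟨((0 : A), j), hmem⟩ : amalg f J) 1
        rw [h0, map_zero] at this
        have h2 := congrArg (fun z : amalg f J => ((z : A × B)).2) this
        simpa using h2.symm
      have hb0 : (u : A × B).2 = 0 := by
        refine hann _ ⟨(u : A × B).1, (u : A × B).2 - f (u : A × B).1, u.2, by ring⟩ ?_
        intro j hj
        rw [mul_comm]; exact hub j hj
      have hxJ : (u : A × B).1 ∈ Ideal.comap f J := by
        have h : (u : A × B).2 - f (u : A × B).1 ∈ J := u.2
        rw [hb0, zero_sub] at h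
        simpa using J.neg_mem h
      refine ⟨⟨(u : A × B).1, hxJ⟩, ?_⟩
      apply LinearMap.ext; intro a
      have ha : (iota f J a) • (1 : A) = a := by rw [hsmulA]; simp [iota]; rfl
      have := φ.map_smul (iota f J a) 1
      rw [ha, ← hu] at this
      rw [this]
      apply Subtype.ext; apply Prod.ext
      · show a * (u : A × B).1 = (iota f J a : A × B).1 * (u : A × B).1; rfl
      · show (0 : B) = (iota f J a : A × B).2 * (u : A × B).2
        rw [hb0, mul_zero]
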